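/- arXiv:1602.01531 — 2 statements merged into one kernel-verified Lean document; each statement's English description precedes it below -/
import Mathlib

section
/- Under the step-3 bracket condition, for every smooth function f on M and every first-order bracket field Y'_η = [e_i,e_j], one has the pointwise estimate |[L,Y'_η]f| ≤ 2 Σ_{i=1}^d Σ_{α∈Λ} |e_i(Y_α f)| + d·a·Σ_{j=1}^d |e_j f| + d(b+c) Σ_{α∈Λ} |Y_α f|. -/
open scoped Manifold
open Finset

local notation "∞" => (⊤ : ℕ∞)

noncomputable section

variable {E : Type*} [NormedAddCommGroup E] [NormedSpace ℝ E]
  {H : Type*} [TopologicalSpace H] {I : ModelWithCorners ℝ E H}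
  {M : Type*} [TopologicalSpace M] [ChartedSpace H M]
  [IsManifold I ((⊤ : ℕ∞) : WithTop ℕ∞) M] [CompactSpace M] [ConnectedSpace M]
  {d : ℕ} {Λ : Type*} [Fintype Λ]

/-- The operator `L = ∑ j, e j ∘ e j` (sum of squares of vector fields),
where vector fields are encoded as derivations on smooth functions. -/
def Lop (e : Fin d → Derivation ℝ C^∞⟮I, M; ℝ⟯ C^∞⟮I, M; ℝ⟯)
    (f : C^∞⟮I, M; ℝ⟯) : C^∞⟮I, M; ℝ⟯ :=
  ∑ j, e j (e j f)

/-- `Γ(f,f) = ∑ j |e j f|²`. -/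
def GammaOp (e : Fin d → Derivation ℝ C^∞⟮I, M; ℝ⟯ C^∞⟮I, M; ℝ⟯)
    (f : C^∞⟮I, M; ℝ⟯) : C^∞⟮I, M; ℝ⟯ :=
  ∑ j, e j f * e j f

/-- `Γ^Z(f,f) = ∑ α |Y α f|²`. -/
def GammaZOp (Y : Λ → Derivation ℝ C^∞⟮I, M; ℝ⟯ C^∞⟮I, M; ℝ⟯)
    (f : C^∞⟮I, M; ℝ⟯) : C^∞⟮I, M; ℝ⟯ :=
  ∑ α, Y α f * Y α f

/-- `Γ₂(f,f) = (1/2)[L(Γ(f,f)) − 2 ∑ j (e j f)(e j (L f))]`. -/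
def Gamma2Op (e : Fin d → Derivation ℝ C^∞⟮I, M; ℝ⟯ C^∞⟮I, M; ℝ⟯)
    (f : C^∞⟮I, M; ℝ⟯) : C^∞⟮I, M; ℝ⟯ :=
  (1 / 2 : ℝ) • (Lop e (GammaOp e f) - 2 • ∑ j, e j f * e j (Lop e f))

/-- `Γ₂^Z(f,f) = (1/2)[L(Γ^Z(f,f)) − 2 ∑ α (Y α f)(Y α (L f))]`. -/
def Gamma2ZOp (e : Fin d → Derivation ℝ C^∞⟮I, M; ℝ⟯ C^∞⟮I, M; ℝ⟯)
    (Y : Λ → Derivation ℝ C^∞⟮I, M; ℝ⟯ C^∞⟮I, M; ℝ⟯)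
    (f : C^∞⟮I, M; ℝ⟯) : C^∞⟮I, M; ℝ⟯ :=
  (1 / 2 : ℝ) • (Lop e (GammaZOp Y f) - 2 • ∑ α, Y α f * Y α (Lop e f))

/-- Index set for the bracket vector fields in the step-3 situation: first-order brackets
`Y'_{(i,j)} = [e_i,e_j]` and second-order brackets `Y''_{(i,j,k)} = [e_i,[e_j,e_k]]`. -/
abbrev Step3Index (d : ℕ) := (Fin d × Fin d) ⊕ (Fin d × Fin d × Fin d)

/-- The bracket vector fields `Y'_{(i,j)} = [e_i,e_j]` and `Y''_{(i,j,k)} = [e_i,[e_j,e_k]]`. -/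
def Yfields (e : Fin d → Derivation ℝ C^∞⟮I, M; ℝ⟯ C^∞⟮I, M; ℝ⟯) :
    Step3Index d → Derivation ℝ C^∞⟮I, M; ℝ⟯ C^∞⟮I, M; ℝ⟯ :=
  Sum.elim (fun p => ⁅e p.1, e p.2⁆) (fun p => ⁅e p.1, ⁅e p.2.1, e p.2.2⁆⁆)

/-- The step-3 bracket condition: every triple bracket `[e_i,[e_j,[e_k,e_l]]]` is a combination
`a^n_{ijkl} e_n + b^η_{ijkl} Y'_η + c^A_{ijkl} Y''_A` with smooth coefficient functions. -/
def Step3Bracket (e : Fin d → Derivation ℝ C^∞⟮I, M; ℝ⟯ C^∞⟮I, M; ℝ⟯)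
    (ca : Fin d → Fin d → Fin d → Fin d → Fin d → C^∞⟮I, M; ℝ⟯)
    (cb : Fin d → Fin d → Fin d → Fin d → Fin d × Fin d → C^∞⟮I, M; ℝ⟯)
    (cc : Fin d → Fin d → Fin d → Fin d → Fin d × Fin d × Fin d → C^∞⟮I, M; ℝ⟯) : Prop :=
  ∀ i j k l, ⁅e i, ⁅e j, ⁅e k, e l⁆⁆⁆ =
    (∑ n, ca i j k l n • e n)
      + (∑ η : Fin d × Fin d, cb i j k l η • Yfields e (Sum.inl η))
      + (∑ A : Fin d × Fin d × Fin d, cc i j k l A • Yfields e (Sum.inr A))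

set_option linter.unusedSectionVars false in
lemma smooth_sum_apply' {ι : Type*} (s : Finset ι) (g : ι → C^∞⟮I, M; ℝ⟯) (x : M) :
    (∑ k ∈ s, g k) x = ∑ k ∈ s, g k x :=
  map_sum (ContMDiffMap.evalRingHom x) g s

lemma deriv_sum_apply' {R A ι : Type*} [CommSemiring R] [CommSemiring A] [Algebra R A]
    (s : Finset ι) (D : ι → Derivation R A A) (f : A) :
    (∑ k ∈ s, D k) f = ∑ k ∈ s, D k f :=
  map_sum ({ toFun := fun D : Derivation R A A => D f, map_zero' := rfl,
             map_add' := fun _ _ => rfl } : Derivation R A A →+ A) D s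

set_option maxHeartbeats 1000000 in
/-- Under the step-3 bracket condition with coefficient bounds `a, b, c`, for every smooth `f`
and every first-order bracket field `Y'_η = [e_i,e_j]`, pointwise:
`|[L,Y'_η]f| ≤ 2 ∑_{i,α} |e_i(Y_α f)| + d·a·∑_j |e_j f| + d(b+c) ∑_α |Y_α f|`. -/
theorem commutator_L_Yprime_estimate
    (e : Fin d → Derivation ℝ C^∞⟮I, M; ℝ⟯ C^∞⟮I, M; ℝ⟯)
    (ca : Fin d → Fin d → Fin d → Fin d → Fin d → C^∞⟮I, M; ℝ⟯)
    (cb : Fin d → Fin d → Fin d → Fin d → Fin d × Fin d → C^∞⟮I, M; ℝ⟯)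
    (cc : Fin d → Fin d → Fin d → Fin d → Fin d × Fin d × Fin d → C^∞⟮I, M; ℝ⟯)
    (hbr : Step3Bracket e ca cb cc)
    (a b c : ℝ)
    (hca : ∀ i j k l n (x : M), |ca i j k l n x| ≤ a)
    (hcb : ∀ i j k l η (x : M), |cb i j k l η x| ≤ b)
    (hcc : ∀ i j k l A (x : M), |cc i j k l A x| ≤ c)
    (f : C^∞⟮I, M; ℝ⟯) (i j : Fin d) (x : M) :
    |Lop e (Yfields e (Sum.inl (i, j)) f) x - Yfields e (Sum.inl (i, j)) (Lop e f) x| ≤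
      2 * ∑ i', ∑ α : Step3Index d, |e i' (Yfields e α f) x|
        + (d : ℝ) * a * ∑ j', |e j' f x|
        + (d : ℝ) * (b + c) * ∑ α : Step3Index d, |Yfields e α f x| := by
  classical
  have hy : Yfields e (Sum.inl (i, j)) = ⁅e i, e j⁆ := by unfold Yfields; rfl
  have hbrW : ∀ k : Fin d, ⁅e k, ⁅e k, Yfields e (Sum.inl (i, j))⁆⁆ =
      (∑ n, ca k k i j n • e n)
        + (∑ η : Fin d × Fin d, cb k k i j η • Yfields e (Sum.inl η))
        + (∑ A : Fin d × Fin d × Fin d, cc k k i j A • Yfields e (Sum.inr A)) := by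
    intro k; rw [hy]; exact hbr k k i j
  have hZ0 : ∀ k : Fin d, Yfields e (Sum.inr (k, i, j)) = ⁅e k, Yfields e (Sum.inl (i, j))⁆ := by
    intro k; rw [hy]; unfold Yfields; rfl
  set W := Yfields e (Sum.inl (i, j)) with hW
  have hZ : ∀ k : Fin d, Yfields e (Sum.inr (k, i, j)) = ⁅e k, W⁆ := hZ0
  -- the function-level commutator identity
  have key : Lop e (W f) - W (Lop e f)
      = ∑ k, (e k (⁅e k, W⁆ f) + e k (⁅e k, W⁆ f) - ⁅e k, ⁅e k, W⁆⁆ f) := by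
    unfold Lop
    rw [map_sum, ← Finset.sum_sub_distrib]
    refine Finset.sum_congr rfl fun k _ => ?_
    simp only [Derivation.commutator_apply, map_sub]
    abel
  -- expand the triple bracket using the step-3 condition
  have hbr' : ∀ k : Fin d, ⁅e k, ⁅e k, W⁆⁆ f
      = (∑ n, ca k k i j n * e n f)
        + (∑ η : Fin d × Fin d, cb k k i j η * Yfields e (Sum.inl η) f)
        + (∑ A : Fin d × Fin d × Fin d, cc k k i j A * Yfields e (Sum.inr A) f) := by
    intro k
    rw [hbrW k]
    simp only [Derivation.add_apply, deriv_sum_apply', Derivation.smul_apply, smul_eq_mul]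
  -- pointwise version
  have hval : Lop e (W f) x - W (Lop e f) x
      = ∑ k, (e k (⁅e k, W⁆ f) x + e k (⁅e k, W⁆ f) x
          - ((∑ n, ca k k i j n x * e n f x)
            + (∑ η : Fin d × Fin d, cb k k i j η x * Yfields e (Sum.inl η) f x)
            + (∑ A : Fin d × Fin d × Fin d, cc k k i j A x * Yfields e (Sum.inr A) f x))) := by
    have h := congrArg (fun g : C^∞⟮I, M; ℝ⟯ => g x) key
    simp only [ContMDiffMap.coe_sub, Pi.sub_apply] at h
    rw [smooth_sum_apply'] at h
    rw [h]
    refine Finset.sum_congr rfl fun k _ => ?_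
    rw [hbr' k]
    simp only [ContMDiffMap.coe_sub, ContMDiffMap.coe_add, ContMDiffMap.coe_mul, Pi.sub_apply,
      Pi.add_apply, Pi.mul_apply]
    rw [smooth_sum_apply', smooth_sum_apply', smooth_sum_apply']
    simp only [ContMDiffMap.coe_mul, Pi.mul_apply]
  rw [hval]
  -- notation for the various sums
  set S1 : ℝ := ∑ j', |e j' f x| with hS1
  set Sb : ℝ := ∑ η : Fin d × Fin d, |Yfields e (Sum.inl η) f x| with hSb
  set Sc : ℝ := ∑ A : Fin d × Fin d × Fin d, |Yfields e (Sum.inr A) f x| with hSc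
  set T : ℝ := ∑ i', ∑ α : Step3Index d, |e i' (Yfields e α f) x| with hT
  have hS1n : 0 ≤ S1 := Finset.sum_nonneg fun _ _ => abs_nonneg _
  have hSbn : 0 ≤ Sb := Finset.sum_nonneg fun _ _ => abs_nonneg _
  have hScn : 0 ≤ Sc := Finset.sum_nonneg fun _ _ => abs_nonneg _
  have ha0 : 0 ≤ a := le_trans (abs_nonneg _) (hca i i i i i x)
  have hb0 : 0 ≤ b := le_trans (abs_nonneg _) (hcb i i i i (i, i) x)
  have hc0 : 0 ≤ c := le_trans (abs_nonneg _) (hcc i i i i (i, i, i) x)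
  have hd0 : (0 : ℝ) ≤ d := Nat.cast_nonneg d
  -- per-term bound
  have hterm : ∀ k : Fin d,
      |e k (⁅e k, W⁆ f) x + e k (⁅e k, W⁆ f) x
          - ((∑ n, ca k k i j n x * e n f x)
            + (∑ η : Fin d × Fin d, cb k k i j η x * Yfields e (Sum.inl η) f x)
            + (∑ A : Fin d × Fin d × Fin d, cc k k i j A x * Yfields e (Sum.inr A) f x))|
        ≤ 2 * |e k (⁅e k, W⁆ f) x| + (a * S1 + (b * Sb + c * Sc)) := by
    intro k
    have h1 : |∑ n, ca k k i j n x * e n f x| ≤ a * S1 := by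
      refine le_trans (Finset.abs_sum_le_sum_abs _ _) ?_
      rw [hS1, Finset.mul_sum]
      exact Finset.sum_le_sum fun n _ => by
        rw [abs_mul]
        exact mul_le_mul_of_nonneg_right (hca k k i j n x) (abs_nonneg _)
    have h2 : |∑ η : Fin d × Fin d, cb k k i j η x * Yfields e (Sum.inl η) f x| ≤ b * Sb := by
      refine le_trans (Finset.abs_sum_le_sum_abs _ _) ?_
      rw [hSb, Finset.mul_sum]
      exact Finset.sum_le_sum fun η _ => by
        rw [abs_mul]
        exact mul_le_mul_of_nonneg_right (hcb k k i j η x) (abs_nonneg _)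
    have h3 : |∑ A : Fin d × Fin d × Fin d, cc k k i j A x * Yfields e (Sum.inr A) f x| ≤ c * Sc := by
      refine le_trans (Finset.abs_sum_le_sum_abs _ _) ?_
      rw [hSc, Finset.mul_sum]
      exact Finset.sum_le_sum fun A _ => by
        rw [abs_mul]
        exact mul_le_mul_of_nonneg_right (hcc k k i j A x) (abs_nonneg _)
    have h4 := abs_sub (e k (⁅e k, W⁆ f) x + e k (⁅e k, W⁆ f) x)
      ((∑ n, ca k k i j n x * e n f x)
        + (∑ η : Fin d × Fin d, cb k k i j η x * Yfields e (Sum.inl η) f x)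
        + (∑ A : Fin d × Fin d × Fin d, cc k k i j A x * Yfields e (Sum.inr A) f x))
    have h5 := abs_add_le (e k (⁅e k, W⁆ f) x) (e k (⁅e k, W⁆ f) x)
    have h6 := abs_add_le ((∑ n, ca k k i j n x * e n f x)
        + (∑ η : Fin d × Fin d, cb k k i j η x * Yfields e (Sum.inl η) f x))
      (∑ A : Fin d × Fin d × Fin d, cc k k i j A x * Yfields e (Sum.inr A) f x)
    have h7 := abs_add_le (∑ n, ca k k i j n x * e n f x)
      (∑ η : Fin d × Fin d, cb k k i j η x * Yfields e (Sum.inl η) f x)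
    linarith
  -- each `|e k ([e k, W] f) x|` is one term of the double sum `T`
  have hTk : ∀ k : Fin d, |e k (⁅e k, W⁆ f) x| ≤ ∑ α : Step3Index d, |e k (Yfields e α f) x| := by
    intro k
    rw [← hZ k]
    exact Finset.single_le_sum (fun α _ => abs_nonneg (e k (Yfields e α f) x))
      (Finset.mem_univ (Sum.inr (k, i, j) : Step3Index d))
  have hsumT : ∑ k, |e k (⁅e k, W⁆ f) x| ≤ T := by
    rw [hT]
    exact Finset.sum_le_sum fun k _ => hTk k
  -- total sum bound
  have htotal : |∑ k, (e k (⁅e k, W⁆ f) x + e k (⁅e k, W⁆ f) x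
          - ((∑ n, ca k k i j n x * e n f x)
            + (∑ η : Fin d × Fin d, cb k k i j η x * Yfields e (Sum.inl η) f x)
            + (∑ A : Fin d × Fin d × Fin d, cc k k i j A x * Yfields e (Sum.inr A) f x)))|
      ≤ 2 * (∑ k, |e k (⁅e k, W⁆ f) x|) + (d : ℝ) * (a * S1 + (b * Sb + c * Sc)) := by
    refine le_trans (Finset.abs_sum_le_sum_abs _ _) ?_
    refine le_trans (Finset.sum_le_sum fun k _ => hterm k) ?_
    rw [Finset.sum_add_distrib, Finset.sum_const, Finset.card_univ, Fintype.card_fin,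
      ← Finset.mul_sum, nsmul_eq_mul]
  have hsplit : ∑ α : Step3Index d, |Yfields e α f x| = Sb + Sc := by
    rw [hSb, hSc, Fintype.sum_sum_type]
  rw [hsplit]
  refine le_trans htotal ?_
  nlinarith [mul_nonneg (mul_nonneg hd0 hc0) hSbn, mul_nonneg (mul_nonneg hd0 hb0) hScn, hsumT]
end
end

section
/- Under the step-3 bracket condition, for every smooth function f on M and every second-order bracket field Y''_A = [e_i,[e_j,e_k]], one has the pointwise estimate |[L,Y''_A]f| ≤ 2a Σ_{i,j=1}^d |e_i e_j f| + 2(b+c) Σ_{i=1}^d Σ_{α∈Λ} |e_i Y_α f| + d(a' + a c d⁴) Σ_{j=1}^d |e_j f| + (d b' + b c d⁵ + d c' + b + c² d⁴) Σ_{α∈Λ} |Y_α f|. -/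
open scoped Manifold
open Finset

local notation "∞" => (⊤ : ℕ∞)

noncomputable section

variable {E : Type*} [NormedAddCommGroup E] [NormedSpace ℝ E]
  {H : Type*} [TopologicalSpace H] {I : ModelWithCorners ℝ E H}
  {M : Type*} [TopologicalSpace M] [ChartedSpace H M]
  [IsManifold I ∞ M] [CompactSpace M] [ConnectedSpace M]
  {d : ℕ} {Λ : Type*} [Fintype Λ]

set_option linter.unusedSectionVars false
set_option maxHeartbeats 1000000

section AuxLemmas

lemma deriv_sum_apply {ι : Type*} (s : Finset ι)
    (Ds : ι → Derivation ℝ C^∞⟮I, M; ℝ⟯ C^∞⟮I, M; ℝ⟯) (g : C^∞⟮I, M; ℝ⟯) :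
    (∑ i ∈ s, Ds i) g = ∑ i ∈ s, Ds i g := by
  induction s using Finset.cons_induction with
  | empty => simp
  | cons a s ha ih => rw [Finset.sum_cons, Finset.sum_cons, Derivation.add_apply, ih]

lemma eval_sum {ι : Type*} (s : Finset ι) (g : ι → C^∞⟮I, M; ℝ⟯) (x : M) :
    (∑ i ∈ s, g i) x = ∑ i ∈ s, g i x :=
  map_sum (ContMDiffMap.evalRingHom x) g s

lemma eval_add (g h : C^∞⟮I, M; ℝ⟯) (x : M) : (g + h) x = g x + h x :=
  map_add (ContMDiffMap.evalRingHom x) g h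

lemma eval_mul (g h : C^∞⟮I, M; ℝ⟯) (x : M) : (g * h) x = g x * h x :=
  map_mul (ContMDiffMap.evalRingHom x) g h

lemma eval_sub (g h : C^∞⟮I, M; ℝ⟯) (x : M) : (g - h) x = g x - h x :=
  map_sub (ContMDiffMap.evalRingHom x) g h

lemma abs_sum_le_helper {ι : Type*} [Fintype ι] (κ κ' w v : ι → ℝ) (K K' : ℝ)
    (hκ : ∀ i, |κ i| ≤ K) (hκ' : ∀ i, |κ' i| ≤ K') :
    |∑ i, (κ i * w i + v i * κ' i)| ≤ K * ∑ i, |w i| + K' * ∑ i, |v i| := by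
  calc |∑ i, (κ i * w i + v i * κ' i)| ≤ ∑ i, |κ i * w i + v i * κ' i| :=
        Finset.abs_sum_le_sum_abs _ _
    _ ≤ ∑ i, (K * |w i| + K' * |v i|) := by
        refine Finset.sum_le_sum fun i _ => ?_
        calc |κ i * w i + v i * κ' i| ≤ |κ i| * |w i| + |v i| * |κ' i| := by
              rw [← abs_mul, ← abs_mul]; exact abs_add_le _ _
          _ ≤ K * |w i| + K' * |v i| := by
              refine add_le_add (mul_le_mul_of_nonneg_right (hκ i) (abs_nonneg _)) ?_
              rw [mul_comm]
              exact mul_le_mul_of_nonneg_right (hκ' i) (abs_nonneg _)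
    _ = K * ∑ i, |w i| + K' * ∑ i, |v i| := by
        rw [Finset.sum_add_distrib, Finset.mul_sum, Finset.mul_sum]

lemma abs_sum_le_helper₀ {ι : Type*} [Fintype ι] (κ w : ι → ℝ) (K : ℝ)
    (hκ : ∀ i, |κ i| ≤ K) :
    |∑ i, κ i * w i| ≤ K * ∑ i, |w i| := by
  calc |∑ i, κ i * w i| ≤ ∑ i, |κ i * w i| := Finset.abs_sum_le_sum_abs _ _
    _ ≤ ∑ i, K * |w i| := by
        refine Finset.sum_le_sum fun i _ => ?_
        rw [abs_mul]
        exact mul_le_mul_of_nonneg_right (hκ i) (abs_nonneg _)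
    _ = K * ∑ i, |w i| := (Finset.mul_sum _ _ _).symm

end AuxLemmas

/-- Under the step-3 bracket condition with coefficient bounds `a, a', b, b', c, c'`, for every
smooth `f` and every second-order bracket field `Y''_A = [e_i,[e_j,e_k]]`, pointwise:
`|[L,Y''_A]f| ≤ 2a ∑_{i,j} |e_i e_j f| + 2(b+c) ∑_{i,α} |e_i Y_α f|
  + d(a' + acd⁴) ∑_j |e_j f| + (db' + bcd⁵ + dc' + b + c²d⁴) ∑_α |Y_α f|`. -/
theorem commutator_L_Ydoubleprime_estimate
    (e : Fin d → Derivation ℝ C^∞⟮I, M; ℝ⟯ C^∞⟮I, M; ℝ⟯)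
    (ca : Fin d → Fin d → Fin d → Fin d → Fin d → C^∞⟮I, M; ℝ⟯)
    (cb : Fin d → Fin d → Fin d → Fin d → Fin d × Fin d → C^∞⟮I, M; ℝ⟯)
    (cc : Fin d → Fin d → Fin d → Fin d → Fin d × Fin d × Fin d → C^∞⟮I, M; ℝ⟯)
    (hbr : Step3Bracket e ca cb cc)
    (a a' b b' c c' : ℝ)
    (hca : ∀ i j k l n (x : M), |ca i j k l n x| ≤ a)
    (hcb : ∀ i j k l η (x : M), |cb i j k l η x| ≤ b)
    (hcc : ∀ i j k l A (x : M), |cc i j k l A x| ≤ c)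
    (hca' : ∀ h i j k l n (x : M), |e h (ca i j k l n) x| ≤ a')
    (hcb' : ∀ h i j k l η (x : M), |e h (cb i j k l η) x| ≤ b')
    (hcc' : ∀ h i j k l A (x : M), |e h (cc i j k l A) x| ≤ c')
    (f : C^∞⟮I, M; ℝ⟯) (i j k : Fin d) (x : M) :
    |Lop e (Yfields e (Sum.inr (i, j, k)) f) x
        - Yfields e (Sum.inr (i, j, k)) (Lop e f) x| ≤
      2 * a * ∑ i', ∑ j', |e i' (e j' f) x|
        + 2 * (b + c) * ∑ i', ∑ α : Step3Index d, |e i' (Yfields e α f) x|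
        + (d : ℝ) * (a' + a * c * (d : ℝ) ^ 4) * ∑ j', |e j' f x|
        + ((d : ℝ) * b' + b * c * (d : ℝ) ^ 5 + (d : ℝ) * c' + b + c ^ 2 * (d : ℝ) ^ 4)
            * ∑ α : Step3Index d, |Yfields e α f x| := by
  classical
  have ha0 : 0 ≤ a := le_trans (abs_nonneg _) (hca i i i i i x)
  have hb0 : 0 ≤ b := le_trans (abs_nonneg _) (hcb i i i i (i, i) x)
  have hc0 : 0 ≤ c := le_trans (abs_nonneg _) (hcc i i i i (i, i, i) x)
  have ha'0 : 0 ≤ a' := le_trans (abs_nonneg _) (hca' i i i i i i x)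
  have hb'0 : 0 ≤ b' := le_trans (abs_nonneg _) (hcb' i i i i i (i, i) x)
  have hc'0 : 0 ≤ c' := le_trans (abs_nonneg _) (hcc' i i i i i (i, i, i) x)
  have hd1 : (1 : ℝ) ≤ (d : ℝ) := by exact_mod_cast i.pos
  have hd0 : (0 : ℝ) ≤ (d : ℝ) := le_trans zero_le_one hd1
  -- abbreviations
  set U : Fin d → ℝ := fun h => ∑ n, |e h (e n f) x| with hU
  set V : Fin d → ℝ := fun h => ∑ n, |e n (e h f) x| with hV
  set P : Fin d → ℝ := fun h => ∑ η : Fin d × Fin d, |e h (Yfields e (Sum.inl η) f) x| with hP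
  set Q : Fin d → ℝ := fun h =>
    ∑ A : Fin d × Fin d × Fin d, |e h (Yfields e (Sum.inr A) f) x| with hQ
  set W : Fin d → ℝ := fun h =>
    ∑ η : Fin d × Fin d, |Yfields e (Sum.inr (h, η.1, η.2)) f x| with hW
  set S3 : ℝ := ∑ j', |e j' f x| with hS3
  set S4p : ℝ := ∑ η : Fin d × Fin d, |Yfields e (Sum.inl η) f x| with hS4p
  set S4pp : ℝ := ∑ A : Fin d × Fin d × Fin d, |Yfields e (Sum.inr A) f x| with hS4pp
  set S1 : ℝ := ∑ i', ∑ j', |e i' (e j' f) x| with hS1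
  set S2 : ℝ := ∑ i', ∑ α : Step3Index d, |e i' (Yfields e α f) x| with hS2
  set S4 : ℝ := ∑ α : Step3Index d, |Yfields e α f x| with hS4
  have hS4split : S4 = S4p + S4pp := by
    rw [hS4, hS4p, hS4pp]; exact Fintype.sum_sum_type _
  have hS3n : 0 ≤ S3 := by rw [hS3]; positivity
  have hS4pn : 0 ≤ S4p := by rw [hS4p]; positivity
  have hS4ppn : 0 ≤ S4pp := by rw [hS4pp]; positivity
  have hPn : ∀ h, 0 ≤ P h := fun h => by simp only [hP]; positivity
  have hQn : ∀ h, 0 ≤ Q h := fun h => by simp only [hQ]; positivity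
  -- the bracket field rewrites
  have hYr : ∀ p q r : Fin d, Yfields e (Sum.inr (p, q, r)) = ⁅e p, ⁅e q, e r⁆⁆ :=
    fun _ _ _ => rfl
  have hYl : ∀ η : Fin d × Fin d, Yfields e (Sum.inl η) = ⁅e η.1, e η.2⁆ := fun _ => rfl
  -- expansion of the bracket ⁅e h, Y''⁆ applied to g
  have hZ : ∀ (h p q r : Fin d) (g : C^∞⟮I, M; ℝ⟯),
      (⁅e h, ⁅e p, ⁅e q, e r⁆⁆⁆ : Derivation ℝ C^∞⟮I, M; ℝ⟯ C^∞⟮I, M; ℝ⟯) g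
        = (∑ n, ca h p q r n * e n g)
          + (∑ η : Fin d × Fin d, cb h p q r η * Yfields e (Sum.inl η) g)
          + (∑ A : Fin d × Fin d × Fin d, cc h p q r A * Yfields e (Sum.inr A) g) := by
    intro h p q r g
    rw [hbr h p q r, Derivation.add_apply, Derivation.add_apply,
      deriv_sum_apply, deriv_sum_apply, deriv_sum_apply]
    simp only [Derivation.smul_apply, smul_eq_mul]
  -- pointwise bound for a full bracket applied to f
  have hbrbound : ∀ h p q r : Fin d,
      |(⁅e h, ⁅e p, ⁅e q, e r⁆⁆⁆ : Derivation ℝ C^∞⟮I, M; ℝ⟯ C^∞⟮I, M; ℝ⟯) f x|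
        ≤ a * S3 + b * S4p + c * S4pp := by
    intro h p q r
    have hev : (⁅e h, ⁅e p, ⁅e q, e r⁆⁆⁆ : Derivation ℝ C^∞⟮I, M; ℝ⟯ C^∞⟮I, M; ℝ⟯) f x
        = (∑ n, ca h p q r n x * e n f x)
          + (∑ η : Fin d × Fin d, cb h p q r η x * Yfields e (Sum.inl η) f x)
          + (∑ A : Fin d × Fin d × Fin d, cc h p q r A x * Yfields e (Sum.inr A) f x) := by
      rw [hZ h p q r f]
      simp only [eval_add, eval_sum, eval_mul]
    rw [hev]
    have h1 : |∑ n, ca h p q r n x * e n f x| ≤ a * S3 := by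
      rw [hS3]; exact abs_sum_le_helper₀ _ _ _ (fun n => hca h p q r n x)
    have h2 : |∑ η : Fin d × Fin d, cb h p q r η x * Yfields e (Sum.inl η) f x| ≤ b * S4p := by
      rw [hS4p]; exact abs_sum_le_helper₀ _ _ _ (fun η => hcb h p q r η x)
    have h3 : |∑ A : Fin d × Fin d × Fin d, cc h p q r A x * Yfields e (Sum.inr A) f x|
        ≤ c * S4pp := by
      rw [hS4pp]; exact abs_sum_le_helper₀ _ _ _ (fun A => hcc h p q r A x)
    calc |_ + _ + _| ≤ _ := abs_add_three _ _ _
      _ ≤ a * S3 + b * S4p + c * S4pp := by linarith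
  -- the commutator identity, evaluated at x
  have hid : Lop e (Yfields e (Sum.inr (i, j, k)) f) x
        - Yfields e (Sum.inr (i, j, k)) (Lop e f) x
      = ∑ h, ((e h (⁅e h, Yfields e (Sum.inr (i, j, k))⁆ f)) x
          + (⁅e h, Yfields e (Sum.inr (i, j, k))⁆ (e h f)) x) := by
    have h1 : Lop e (Yfields e (Sum.inr (i, j, k)) f)
          - Yfields e (Sum.inr (i, j, k)) (Lop e f)
        = ∑ h, (e h (⁅e h, Yfields e (Sum.inr (i, j, k))⁆ f)
            + ⁅e h, Yfields e (Sum.inr (i, j, k))⁆ (e h f)) := by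
      unfold Lop
      rw [map_sum, ← Finset.sum_sub_distrib]
      refine Finset.sum_congr rfl fun h _ => ?_
      rw [Derivation.commutator_apply, Derivation.commutator_apply, map_sub]
      abel
    calc Lop e (Yfields e (Sum.inr (i, j, k)) f) x
          - Yfields e (Sum.inr (i, j, k)) (Lop e f) x
        = (Lop e (Yfields e (Sum.inr (i, j, k)) f)
            - Yfields e (Sum.inr (i, j, k)) (Lop e f)) x := (eval_sub _ _ _).symm
      _ = _ := by rw [h1]; simp only [eval_sum, eval_add]
  -- per-h bound on the first term
  have hbu : ∀ h : Fin d, |(e h (⁅e h, Yfields e (Sum.inr (i, j, k))⁆ f)) x|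
      ≤ a * U h + b * P h + c * Q h + (a' * S3 + b' * S4p + c' * S4pp) := by
    intro h
    have hev : (e h (⁅e h, Yfields e (Sum.inr (i, j, k))⁆ f)) x
        = (∑ n, (ca h i j k n x * e h (e n f) x + e n f x * e h (ca h i j k n) x))
          + (∑ η : Fin d × Fin d, (cb h i j k η x * e h (Yfields e (Sum.inl η) f) x
              + Yfields e (Sum.inl η) f x * e h (cb h i j k η) x))
          + (∑ A : Fin d × Fin d × Fin d, (cc h i j k A x * e h (Yfields e (Sum.inr A) f) x
              + Yfields e (Sum.inr A) f x * e h (cc h i j k A) x)) := by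
      rw [hYr i j k, hZ h i j k f, map_add, map_add, map_sum, map_sum, map_sum]
      simp only [Derivation.leibniz, smul_eq_mul]
      simp only [eval_add, eval_sum, eval_mul]
    rw [hev]
    have h1 : |∑ n, (ca h i j k n x * e h (e n f) x + e n f x * e h (ca h i j k n) x)|
        ≤ a * U h + a' * S3 := by
      rw [hS3]; simp only [hU]
      exact abs_sum_le_helper _ _ _ _ _ _ (fun n => hca h i j k n x)
        (fun n => hca' h h i j k n x)
    have h2 : |∑ η : Fin d × Fin d, (cb h i j k η x * e h (Yfields e (Sum.inl η) f) x
          + Yfields e (Sum.inl η) f x * e h (cb h i j k η) x)| ≤ b * P h + b' * S4p := by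
      rw [hS4p]; simp only [hP]
      exact abs_sum_le_helper _ _ _ _ _ _ (fun η => hcb h i j k η x)
        (fun η => hcb' h h i j k η x)
    have h3 : |∑ A : Fin d × Fin d × Fin d, (cc h i j k A x * e h (Yfields e (Sum.inr A) f) x
          + Yfields e (Sum.inr A) f x * e h (cc h i j k A) x)| ≤ c * Q h + c' * S4pp := by
      rw [hS4pp]; simp only [hQ]
      exact abs_sum_le_helper _ _ _ _ _ _ (fun A => hcc h i j k A x)
        (fun A => hcc' h h i j k A x)
    calc |_ + _ + _| ≤ _ := abs_add_three _ _ _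
      _ ≤ a * U h + b * P h + c * Q h + (a' * S3 + b' * S4p + c' * S4pp) := by linarith
  -- per-h bound on the second term
  have hbv : ∀ h : Fin d, |(⁅e h, Yfields e (Sum.inr (i, j, k))⁆ (e h f)) x|
      ≤ a * V h + b * (P h + W h)
        + c * (Q h + (d : ℝ) ^ 3 * (a * S3 + b * S4p + c * S4pp)) := by
    intro h
    have hev : (⁅e h, Yfields e (Sum.inr (i, j, k))⁆ (e h f)) x
        = (∑ n, ca h i j k n x * e n (e h f) x)
          + (∑ η : Fin d × Fin d, cb h i j k η x * Yfields e (Sum.inl η) (e h f) x)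
          + (∑ A : Fin d × Fin d × Fin d, cc h i j k A x * Yfields e (Sum.inr A) (e h f) x) := by
      rw [hYr i j k, hZ h i j k (e h f)]
      simp only [eval_add, eval_sum, eval_mul]
    rw [hev]
    have h1 : |∑ n, ca h i j k n x * e n (e h f) x| ≤ a * V h := by
      simp only [hV]
      exact abs_sum_le_helper₀ _ _ _ (fun n => hca h i j k n x)
    have h2 : |∑ η : Fin d × Fin d, cb h i j k η x * Yfields e (Sum.inl η) (e h f) x|
        ≤ b * (P h + W h) := by
      refine (abs_sum_le_helper₀ _ _ _ (fun η => hcb h i j k η x)).trans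
        (mul_le_mul_of_nonneg_left ?_ hb0)
      have hstep : ∀ η : Fin d × Fin d, |Yfields e (Sum.inl η) (e h f) x|
          ≤ |e h (Yfields e (Sum.inl η) f) x| + |Yfields e (Sum.inr (h, η.1, η.2)) f x| := by
        intro η
        have h0 : (⁅e h, Yfields e (Sum.inl η)⁆ f)
            = e h (Yfields e (Sum.inl η) f) - Yfields e (Sum.inl η) (e h f) :=
          Derivation.commutator_apply _
        have heval : Yfields e (Sum.inl η) (e h f) x
            = e h (Yfields e (Sum.inl η) f) x - Yfields e (Sum.inr (h, η.1, η.2)) f x := by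
          have h0' : Yfields e (Sum.inr (h, η.1, η.2)) f
              = e h (Yfields e (Sum.inl η) f) - Yfields e (Sum.inl η) (e h f) := h0
          rw [h0', eval_sub]; ring
        rw [heval]
        exact abs_sub _ _
      calc ∑ η : Fin d × Fin d, |Yfields e (Sum.inl η) (e h f) x|
          ≤ ∑ η : Fin d × Fin d, (|e h (Yfields e (Sum.inl η) f) x|
              + |Yfields e (Sum.inr (h, η.1, η.2)) f x|) := Finset.sum_le_sum fun η _ => hstep η
        _ = P h + W h := by rw [Finset.sum_add_distrib]
    have h3 : |∑ A : Fin d × Fin d × Fin d, cc h i j k A x * Yfields e (Sum.inr A) (e h f) x|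
        ≤ c * (Q h + (d : ℝ) ^ 3 * (a * S3 + b * S4p + c * S4pp)) := by
      refine (abs_sum_le_helper₀ _ _ _ (fun A => hcc h i j k A x)).trans
        (mul_le_mul_of_nonneg_left ?_ hc0)
      have hstep : ∀ A : Fin d × Fin d × Fin d, |Yfields e (Sum.inr A) (e h f) x|
          ≤ |e h (Yfields e (Sum.inr A) f) x| + (a * S3 + b * S4p + c * S4pp) := by
        rintro ⟨p, q, r⟩
        have h0 : (⁅e h, ⁅e p, ⁅e q, e r⁆⁆⁆ : Derivation ℝ C^∞⟮I, M; ℝ⟯ C^∞⟮I, M; ℝ⟯) f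
            = e h (Yfields e (Sum.inr (p, q, r)) f) - Yfields e (Sum.inr (p, q, r)) (e h f) :=
          Derivation.commutator_apply _
        have heval : Yfields e (Sum.inr (p, q, r)) (e h f) x
            = e h (Yfields e (Sum.inr (p, q, r)) f) x
              - (⁅e h, ⁅e p, ⁅e q, e r⁆⁆⁆ : Derivation ℝ C^∞⟮I, M; ℝ⟯ C^∞⟮I, M; ℝ⟯) f x := by
          rw [h0, eval_sub]; ring
        rw [heval]
        exact (abs_sub _ _).trans (add_le_add_right (hbrbound h p q r) _)
      calc ∑ A : Fin d × Fin d × Fin d, |Yfields e (Sum.inr A) (e h f) x|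
          ≤ ∑ A : Fin d × Fin d × Fin d, (|e h (Yfields e (Sum.inr A) f) x|
              + (a * S3 + b * S4p + c * S4pp)) := Finset.sum_le_sum fun A _ => hstep A
        _ = Q h + (d : ℝ) ^ 3 * (a * S3 + b * S4p + c * S4pp) := by
          rw [Finset.sum_add_distrib, Finset.sum_const, Finset.card_univ]
          simp only [hQ, Fintype.card_prod, Fintype.card_fin, nsmul_eq_mul]
          push_cast
          ring
    refine (abs_add_three _ _ _).trans ?_
    linarith
  -- aggregation over h
  have hUS1 : ∑ h, U h = S1 := rfl
  have hVS1 : ∑ h, V h = S1 := Finset.sum_comm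
  have hPQS2 : (∑ h, P h) + (∑ h, Q h) = S2 := by
    rw [← Finset.sum_add_distrib, hS2]
    refine Finset.sum_congr rfl fun h _ => ?_
    exact (Fintype.sum_sum_type (fun α : Step3Index d => |e h (Yfields e α f) x|)).symm
  have hWS4pp : ∑ h, W h = S4pp := by
    simp only [hW, hS4pp, Fintype.sum_prod_type, Prod.mk.eta]
  have hPle : ∑ h, P h ≤ S2 := by
    have := Finset.sum_nonneg (fun h (_ : h ∈ Finset.univ) => hQn h)
    linarith
  have hQle : ∑ h, Q h ≤ S2 := by
    have := Finset.sum_nonneg (fun h (_ : h ∈ Finset.univ) => hPn h)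
    linarith
  -- final computation
  rw [hid]
  calc |∑ h, ((e h (⁅e h, Yfields e (Sum.inr (i, j, k))⁆ f)) x
        + (⁅e h, Yfields e (Sum.inr (i, j, k))⁆ (e h f)) x)|
      ≤ ∑ h, (|(e h (⁅e h, Yfields e (Sum.inr (i, j, k))⁆ f)) x|
          + |(⁅e h, Yfields e (Sum.inr (i, j, k))⁆ (e h f)) x|) :=
        (Finset.abs_sum_le_sum_abs _ _).trans (Finset.sum_le_sum fun h _ => abs_add_le _ _)
    _ ≤ ∑ h, (a * U h + a * V h + 2 * b * P h + 2 * c * Q h + b * W h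
          + (a' * S3 + b' * S4p + c' * S4pp
            + c * ((d : ℝ) ^ 3 * (a * S3 + b * S4p + c * S4pp)))) := by
        refine Finset.sum_le_sum fun h _ => ?_
        have := hbu h
        have := hbv h
        linarith
    _ = a * (∑ h, U h) + a * (∑ h, V h) + 2 * b * (∑ h, P h) + 2 * c * (∑ h, Q h)
          + b * (∑ h, W h)
          + (d : ℝ) * (a' * S3 + b' * S4p + c' * S4pp
            + c * ((d : ℝ) ^ 3 * (a * S3 + b * S4p + c * S4pp))) := by
        rw [Finset.sum_add_distrib, Finset.sum_add_distrib, Finset.sum_add_distrib,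
          Finset.sum_add_distrib, Finset.sum_add_distrib, Finset.sum_const,
          Finset.card_univ, Fintype.card_fin, nsmul_eq_mul,
          ← Finset.mul_sum, ← Finset.mul_sum, ← Finset.mul_sum, ← Finset.mul_sum,
          ← Finset.mul_sum]
    _ ≤ 2 * a * S1 + 2 * (b + c) * S2
          + (d : ℝ) * (a' + a * c * (d : ℝ) ^ 4) * S3
          + ((d : ℝ) * b' + b * c * (d : ℝ) ^ 5 + (d : ℝ) * c' + b + c ^ 2 * (d : ℝ) ^ 4)
            * S4 := by
        rw [hUS1, hVS1, hWS4pp]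
        have h45 : (d : ℝ) ^ 4 ≤ (d : ℝ) ^ 5 := by
          calc (d : ℝ) ^ 4 = 1 * (d : ℝ) ^ 4 := by ring
            _ ≤ (d : ℝ) * (d : ℝ) ^ 4 := by
                refine mul_le_mul_of_nonneg_right hd1 (by positivity)
            _ = (d : ℝ) ^ 5 := by ring
        have t1 : 2 * b * (∑ h, P h) ≤ 2 * b * S2 :=
          mul_le_mul_of_nonneg_left hPle (by linarith)
        have t2 : 2 * c * (∑ h, Q h) ≤ 2 * c * S2 :=
          mul_le_mul_of_nonneg_left hQle (by linarith)
        have t6 : a * c * (d : ℝ) ^ 4 * S3 ≤ a * c * (d : ℝ) ^ 5 * S3 :=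
          mul_le_mul_of_nonneg_right
            (mul_le_mul_of_nonneg_left h45 (mul_nonneg ha0 hc0)) hS3n
        have t7 : b * c * (d : ℝ) ^ 4 * S4p ≤ b * c * (d : ℝ) ^ 5 * S4p :=
          mul_le_mul_of_nonneg_right
            (mul_le_mul_of_nonneg_left h45 (mul_nonneg hb0 hc0)) hS4pn
        have m1 : 0 ≤ b * S4p := mul_nonneg hb0 hS4pn
        have m2 : 0 ≤ (d : ℝ) * b' * S4pp := mul_nonneg (mul_nonneg hd0 hb'0) hS4ppn
        have m3 : 0 ≤ (d : ℝ) * c' * S4p := mul_nonneg (mul_nonneg hd0 hc'0) hS4pn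
        have m4 : 0 ≤ b * c * (d : ℝ) ^ 5 * S4pp :=
          mul_nonneg (mul_nonneg (mul_nonneg hb0 hc0) (by positivity)) hS4ppn
        have m5 : 0 ≤ c ^ 2 * (d : ℝ) ^ 4 * S4p :=
          mul_nonneg (mul_nonneg (by positivity) (by positivity)) hS4pn
        rw [hS4split]
        nlinarith [t1, t2, t6, t7, m1, m2, m3, m4, m5]
end
end
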